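/- Let α ∈ ℂ \ {0, 1} and Ω ∈ ℂ, and let R₁(z) = (12z³ + 4(1 − 5α + 4Ω)z² + α(5α − 4 − 16Ω)z + 3α²)/(16z²(z − 1)(z − α)²). Define w(z) = 1/(4z) + 1/(z − 1) + 1/(4(z − α)). If the Riccati identity w'(z) + w(z)² = R₁(z) holds for every z ∈ ℂ \ {0, 1, α}, then Ω = 0. -/

import Mathlib

lemma riccati_step (α Ω z : ℂ) (hz0 : z ≠ 0) (hz1 : z ≠ 1) (hzα : z ≠ α)
    (h : deriv (fun z : ℂ => 1 / (4 * z) + 1 / (z - 1) + 1 / (4 * (z - α))) z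
        + (1 / (4 * z) + 1 / (z - 1) + 1 / (4 * (z - α))) ^ 2
      = (12 * z ^ 3 + 4 * (1 - 5 * α + 4 * Ω) * z ^ 2
        + α * (5 * α - 4 - 16 * Ω) * z + 3 * α ^ 2)
      / (16 * z ^ 2 * (z - 1) * (z - α) ^ 2)) :
    Ω = 0 := by
  have hz1' : z - 1 ≠ 0 := sub_ne_zero.mpr hz1
  have hzα' : z - α ≠ 0 := sub_ne_zero.mpr hzα
  have h4z : (4 : ℂ) * z ≠ 0 := by simp [hz0]
  have h4zα : (4 : ℂ) * (z - α) ≠ 0 := by simp [hzα']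
  have d1 := (hasDerivAt_const z (1:ℂ)).div ((hasDerivAt_id z).const_mul 4) h4z
  have d2 := (hasDerivAt_const z (1:ℂ)).div ((hasDerivAt_id z).sub_const 1) hz1'
  have d3 := (hasDerivAt_const z (1:ℂ)).div (((hasDerivAt_id z).sub_const α).const_mul 4) h4zα
  have hd := (d1.add d2).add d3
  simp only [id] at hd
  rw [show (fun z : ℂ => 1 / (4 * z) + 1 / (z - 1) + 1 / (4 * (z - α))) = ((((fun x => (1:ℂ)) / fun y => 4 * y) + (fun x => 1) / fun x => x - 1) + (fun x => 1) / fun y => 4 * (y - α)) from rfl, hd.deriv] at h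
  field_simp [hz0, hz1', hzα'] at h
  have key : Ω * (1048576 * z ^ 5 * (z - 1) ^ 4 * (z - α) ^ 5) = 0 := by
    linear_combination (-4096 * z ^ 4 * (z - 1) ^ 3 * (z - α) ^ 4) * h
  rcases mul_eq_zero.mp key with hΩ | hc
  · exact hΩ
  · exfalso
    have : (1048576 : ℂ) * z ^ 5 * (z - 1) ^ 4 * (z - α) ^ 5 ≠ 0 :=
      mul_ne_zero (mul_ne_zero (mul_ne_zero (by norm_num) (pow_ne_zero _ hz0))
        (pow_ne_zero _ hz1')) (pow_ne_zero _ hzα')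
    exact this hc


theorem kovacic_case_one_forces_Omega_zero
    (α Ω : ℂ) (hα0 : α ≠ 0) (hα1 : α ≠ 1)
    (R₁ w : ℂ → ℂ)
    (hR₁ : R₁ = fun z => (12 * z ^ 3 + 4 * (1 - 5 * α + 4 * Ω) * z ^ 2
        + α * (5 * α - 4 - 16 * Ω) * z + 3 * α ^ 2)
      / (16 * z ^ 2 * (z - 1) * (z - α) ^ 2))
    (hw : w = fun z => 1 / (4 * z) + 1 / (z - 1) + 1 / (4 * (z - α)))
    (hRiccati : ∀ z : ℂ, z ≠ 0 → z ≠ 1 → z ≠ α → deriv w z + w z ^ 2 = R₁ z) :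
    Ω = 0 := by
  subst hR₁ hw
  by_cases h2 : α = 2
  · have h := hRiccati 3 (by norm_num) (by norm_num) (by rw [h2]; norm_num)
    simp only at h
    exact riccati_step α Ω 3 (by norm_num) (by norm_num) (by rw [h2]; norm_num) h
  · have h := hRiccati 2 (by norm_num) (by norm_num) (fun hc => h2 hc.symm)
    simp only at h
    exact riccati_step α Ω 2 (by norm_num) (by norm_num) (fun hc => h2 hc.symm) h
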